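/- Let $y_1, \ldots, y_m$ be a finite real sequence such that both $(y_k)$ and $(\Delta y_k)$ are monotonic, and such that $\max\{\max_k |\Delta^2 y_k|, \min_k |\Delta y_k|\} > 0$. Then $m \ge \left(\frac{2|y_m - y_1|}{\max\{\max_k |\Delta^2 y_k|, \min_k |\Delta y_k|\}}\right)^{1/2}$. -/

import Mathlib

private lemma gauss_real (n : ℕ) : ∑ i ∈ Finset.range n, (i : ℝ) = n * (n - 1) / 2 := by
  induction n with
  | zero => simp
  | succ n ih =>
    rw [Finset.sum_range_succ, ih]
    push_cast
    ring

private lemma key_lemma (m : ℕ) (y : ℕ → ℝ) (A B : ℝ) (hm : 3 ≤ m)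
    (hy : MonotoneOn y (Set.Icc 1 m))
    (hA : ∀ k : ℕ, 1 ≤ k → k + 2 ≤ m → |y (k + 2) - 2 * y (k + 1) + y k| ≤ A)
    (hA0 : 0 ≤ A)
    (j : ℕ) (hj1 : 1 ≤ j) (hjm : j + 1 ≤ m) (hBj : B = |y (j + 1) - y j|) :
    2 * (y m - y 1) ≤ (m : ℝ) ^ 2 * max A B := by
  have chain : ∀ a b : ℕ, 1 ≤ a → a ≤ b → b + 1 ≤ m →
      |(y (b + 1) - y b) - (y (a + 1) - y a)| ≤ ((b : ℝ) - a) * A := by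
    intro a b ha hab
    induction b, hab using Nat.le_induction with
    | base => intro _; simp
    | succ b hab ih =>
      intro hbm
      have h1 : |y (b + 2) - 2 * y (b + 1) + y b| ≤ A := hA b (ha.trans hab) (by omega)
      have h2 := ih (by omega)
      calc |(y (b + 1 + 1) - y (b + 1)) - (y (a + 1) - y a)|
          ≤ |(y (b + 1 + 1) - y (b + 1)) - (y (b + 1) - y b)|
            + |(y (b + 1) - y b) - (y (a + 1) - y a)| := abs_sub_le _ _ _
        _ ≤ A + ((b : ℝ) - a) * A := by
            refine add_le_add ?_ h2
            have : (y (b + 1 + 1) - y (b + 1)) - (y (b + 1) - y b)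
                = y (b + 2) - 2 * y (b + 1) + y b := by ring_nf
            rw [this]; exact h1
        _ = (((b + 1 : ℕ) : ℝ) - a) * A := by push_cast; ring
  have step : ∀ k : ℕ, 1 ≤ k → k + 1 ≤ m →
      y (k + 1) - y k ≤ B + |(k : ℝ) - (j : ℝ)| * A := by
    intro k hk hkm
    have hBabs : y (j + 1) - y j ≤ B := by rw [hBj]; exact le_abs_self _
    rcases le_total j k with h | h
    · have hc := chain j k hj1 h hkm
      have h1 : (y (k + 1) - y k) - (y (j + 1) - y j) ≤ ((k : ℝ) - j) * A := (abs_le.mp hc).2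
      have h2 : |(k : ℝ) - j| = (k : ℝ) - j :=
        abs_of_nonneg (sub_nonneg.mpr (by exact_mod_cast h))
      rw [h2]; linarith
    · have hc := chain k j hk h hjm
      have h1 : (y (k + 1) - y k) - (y (j + 1) - y j) ≤ ((j : ℝ) - k) * A := by
        have := (abs_le.mp hc).1
        linarith
      have h2 : |(k : ℝ) - j| = (j : ℝ) - k := by
        rw [abs_sub_comm]
        exact abs_of_nonneg (sub_nonneg.mpr (by exact_mod_cast h))
      rw [h2]; linarith
  have tel : ∑ k ∈ Finset.Ico 1 m, (y (k + 1) - y k) = y m - y 1 := by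
    have h1 := Finset.sum_range_sub y m
    have h2 := Finset.sum_range_sub y 1
    rw [Finset.sum_Ico_eq_sub _ (by omega : 1 ≤ m), h1, h2]
    ring
  have hsum : y m - y 1 ≤ ∑ k ∈ Finset.Ico 1 m, (B + |(k : ℝ) - j| * A) := by
    rw [← tel]
    refine Finset.sum_le_sum fun k hk => ?_
    obtain ⟨hk1, hk2⟩ := Finset.mem_Ico.mp hk
    exact step k hk1 (by omega)
  have hsplit : ∑ k ∈ Finset.Ico 1 m, |(k : ℝ) - j| =
      ∑ k ∈ Finset.Ico 1 j, ((j : ℝ) - k) + ∑ k ∈ Finset.Ico j m, ((k : ℝ) - j) := by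
    rw [← Finset.sum_Ico_consecutive _ hj1 (by omega : j ≤ m)]
    congr 1
    · refine Finset.sum_congr rfl fun k hk => ?_
      rw [abs_sub_comm]
      exact abs_of_nonneg (sub_nonneg.mpr (by exact_mod_cast (Finset.mem_Ico.mp hk).2.le))
    · refine Finset.sum_congr rfl fun k hk => ?_
      exact abs_of_nonneg (sub_nonneg.mpr (by exact_mod_cast (Finset.mem_Ico.mp hk).1))
  have hS1 : ∑ k ∈ Finset.Ico 1 j, ((j : ℝ) - k) = ((j : ℝ) - 1) * j / 2 := by
    rw [Finset.sum_Ico_eq_sum_range]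
    have h : ∀ i ∈ Finset.range (j - 1), ((j : ℝ) - ((1 + i : ℕ) : ℝ)) = ((j : ℝ) - 1) - (i : ℝ) := by
      intro i _; push_cast; ring
    rw [Finset.sum_congr rfl h, Finset.sum_sub_distrib, Finset.sum_const, gauss_real]
    have hc : ((j - 1 : ℕ) : ℝ) = (j : ℝ) - 1 := by
      rw [Nat.cast_sub hj1]; norm_num
    rw [Finset.card_range, nsmul_eq_mul, hc]
    ring
  have hS2 : ∑ k ∈ Finset.Ico j m, ((k : ℝ) - j) = ((m : ℝ) - j) * ((m : ℝ) - j - 1) / 2 := by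
    rw [Finset.sum_Ico_eq_sum_range]
    have h : ∀ i ∈ Finset.range (m - j), (((j + i : ℕ) : ℝ) - (j : ℝ)) = (i : ℝ) := by
      intro i _; push_cast; ring
    rw [Finset.sum_congr rfl h, gauss_real]
    have hc : ((m - j : ℕ) : ℝ) = (m : ℝ) - j := by
      rw [Nat.cast_sub (by omega : j ≤ m)]
    rw [hc]
  have htotal : ∑ k ∈ Finset.Ico 1 m, (B + |(k : ℝ) - j| * A)
      = ((m : ℝ) - 1) * B
        + (((j : ℝ) - 1) * j / 2 + ((m : ℝ) - j) * ((m : ℝ) - j - 1) / 2) * A := by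
    rw [Finset.sum_add_distrib, Finset.sum_const, ← Finset.sum_mul, hsplit, hS1, hS2,
      Nat.card_Ico]
    have hc : ((m - 1 : ℕ) : ℝ) = (m : ℝ) - 1 := by
      rw [Nat.cast_sub (by omega : 1 ≤ m)]; norm_num
    rw [nsmul_eq_mul, hc]
  have hj' : (1 : ℝ) ≤ (j : ℝ) := by exact_mod_cast hj1
  have hjm' : (j : ℝ) + 1 ≤ (m : ℝ) := by exact_mod_cast hjm
  have hB0 : 0 ≤ B := by rw [hBj]; positivity
  have hAle : A ≤ max A B := le_max_left _ _
  have hBle : B ≤ max A B := le_max_right _ _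
  have hM0 : (0 : ℝ) ≤ max A B := hA0.trans hAle
  have hC0 : (0 : ℝ) ≤ ((j : ℝ) - 1) * j / 2 + ((m : ℝ) - j) * ((m : ℝ) - j - 1) / 2 := by
    have h1 : (0:ℝ) ≤ ((j : ℝ) - 1) * j := by nlinarith
    have h2 : (0:ℝ) ≤ ((m : ℝ) - j) * ((m : ℝ) - j - 1) := by nlinarith
    linarith
  have coeff : 2 * (((m : ℝ) - 1)
      + (((j : ℝ) - 1) * j / 2 + ((m : ℝ) - j) * ((m : ℝ) - j - 1) / 2)) ≤ (m : ℝ) ^ 2 := by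
    nlinarith [mul_nonneg (by linarith : (0:ℝ) ≤ (j : ℝ) - 1) (by linarith : (0:ℝ) ≤ (m : ℝ) - j - 1)]
  nlinarith [hsum, htotal.symm, mul_le_mul_of_nonneg_left hBle (by linarith : (0:ℝ) ≤ (m : ℝ) - 1),
    mul_le_mul_of_nonneg_left hAle hC0, mul_nonneg hC0 hM0,
    mul_le_mul_of_nonneg_right coeff hM0]

/-- Lemma 2 (L6): lower bound on the length of a sequence with monotone values
and monotone first differences. -/
theorem length_lower_bound (m : ℕ) (y : ℕ → ℝ) (A B : ℝ) (hm : 3 ≤ m)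
    (hy : MonotoneOn y (Set.Icc 1 m) ∨ AntitoneOn y (Set.Icc 1 m))
    (hΔ : MonotoneOn (fun k => y (k + 1) - y k) (Set.Icc 1 (m - 1)) ∨
          AntitoneOn (fun k => y (k + 1) - y k) (Set.Icc 1 (m - 1)))
    (hA : IsGreatest {r : ℝ | ∃ k : ℕ, 1 ≤ k ∧ k + 2 ≤ m ∧
            r = |y (k + 2) - 2 * y (k + 1) + y k|} A)
    (hB : IsLeast {r : ℝ | ∃ k : ℕ, 1 ≤ k ∧ k + 1 ≤ m ∧
            r = |y (k + 1) - y k|} B)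
    (hpos : 0 < max A B) :
    Real.sqrt (2 * |y m - y 1| / max A B) ≤ (m : ℝ) := by
  obtain ⟨⟨kA, hkA1, hkA2, hkAe⟩, hAub⟩ := hA
  obtain ⟨⟨jB, hjB1, hjB2, hjBe⟩, hBlb⟩ := hB
  have hA0 : 0 ≤ A := hkAe ▸ abs_nonneg _
  have hAbound : ∀ k : ℕ, 1 ≤ k → k + 2 ≤ m → |y (k + 2) - 2 * y (k + 1) + y k| ≤ A :=
    fun k h1 h2 => hAub ⟨k, h1, h2, rfl⟩
  have h1mem : (1 : ℕ) ∈ Set.Icc 1 m := by constructor <;> omega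
  have hmmem : m ∈ Set.Icc 1 m := by constructor <;> omega
  have key2 : 2 * |y m - y 1| ≤ (m : ℝ) ^ 2 * max A B := by
    rcases hy with hy | hy
    · have hmono : y 1 ≤ y m := hy h1mem hmmem (by omega)
      rw [abs_of_nonneg (by linarith)]
      exact key_lemma m y A B hm hy hAbound hA0 jB hjB1 hjB2 hjBe
    · have hy' : MonotoneOn (fun k => -y k) (Set.Icc 1 m) :=
        fun a ha b hb hab => neg_le_neg (hy ha hb hab)
      have hA' : ∀ k : ℕ, 1 ≤ k → k + 2 ≤ m →
          |(fun k => -y k) (k + 2) - 2 * (fun k => -y k) (k + 1) + (fun k => -y k) k| ≤ A := by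
        intro k h1 h2
        have := hAbound k h1 h2
        simp only
        rw [show -y (k + 2) - 2 * (-y (k + 1)) + (-y k)
            = -(y (k + 2) - 2 * y (k + 1) + y k) by ring, abs_neg]
        exact this
      have hB' : B = |(fun k => -y k) (jB + 1) - (fun k => -y k) jB| := by
        simp only
        rw [show -y (jB + 1) - (-y jB) = -(y (jB + 1) - y jB) by ring, abs_neg]
        exact hjBe
      have hk := key_lemma m (fun k => -y k) A B hm hy' hA' hA0 jB hjB1 hjB2 hB'
      have hmono : y m ≤ y 1 := hy h1mem hmmem (by omega)
      rw [abs_of_nonpos (by linarith)]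
      linarith
  have hdiv : 2 * |y m - y 1| / max A B ≤ (m : ℝ) ^ 2 := (div_le_iff₀ hpos).mpr (by
    calc 2 * |y m - y 1| ≤ (m : ℝ) ^ 2 * max A B := key2
      _ = (m : ℝ) ^ 2 * max A B := rfl)
  calc Real.sqrt (2 * |y m - y 1| / max A B) ≤ Real.sqrt ((m : ℝ) ^ 2) :=
        Real.sqrt_le_sqrt hdiv
    _ = (m : ℝ) := Real.sqrt_sq (by positivity)
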